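/- Let p be prime and χ a Dirichlet character mod p of order p−1 (i.e., χ generates the character group). Set z_k = χ(k)·e(k/p) for k = 1,...,p−1. Then for every ν with 1 ≤ ν ≤ (p−1)² + (p−1) − 1, one has |∑_{k=1}^{p−1} z_k^ν| ≤ √p. -/

import Mathlib

noncomputable def e (x : ℝ) : ℂ := Complex.exp (2 * Real.pi * Complex.I * x)

open Finset

section Aux

variable {p : ℕ} [Fact p.Prime]

/-- The conjugate of the Gauss sum of a Dirichlet character mod `p` w.r.t. the standard
additive character. -/
lemma conj_gaussSum_aux (χ : DirichletCharacter ℂ p) :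
    (starRingEnd ℂ) (gaussSum χ ZMod.stdAddChar) = gaussSum χ⁻¹ (ZMod.stdAddChar)⁻¹ := by
  rw [gaussSum, gaussSum, map_sum]
  refine Finset.sum_congr rfl fun a _ => ?_
  rw [map_mul]
  congr 1
  · rw [starRingEnd_apply]; exact MulChar.star_apply' χ a
  · rw [AddChar.inv_apply, ZMod.stdAddChar_apply, ZMod.stdAddChar_apply,
      AddChar.map_neg_eq_inv, Circle.coe_inv_eq_conj]

/-- The norm of the Gauss sum of a nontrivial Dirichlet character mod a prime `p` is `√p`. -/
lemma norm_gaussSum_aux {χ : DirichletCharacter ℂ p} (hχ : χ ≠ 1) :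
    ‖gaussSum χ ZMod.stdAddChar‖ = Real.sqrt p := by
  have h := gaussSum_mul_gaussSum_eq_card hχ (ZMod.isPrimitive_stdAddChar p)
  rw [ZMod.card] at h
  have h2 : (gaussSum χ ZMod.stdAddChar) * (starRingEnd ℂ) (gaussSum χ ZMod.stdAddChar)
      = (p : ℂ) := by rw [conj_gaussSum_aux, h]
  rw [Complex.mul_conj] at h2
  have h3 : Complex.normSq (gaussSum χ ZMod.stdAddChar) = (p : ℝ) := by exact_mod_cast h2
  rw [Complex.norm_def, h3]

/-- A nontrivial Dirichlet character of prime level is primitive. -/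
lemma isPrimitive_aux {χ : DirichletCharacter ℂ p} (hχ : χ ≠ 1) : χ.IsPrimitive := by
  have hd : χ.conductor ∣ p := χ.conductor_dvd_level
  rcases (Fact.out : p.Prime).eq_one_or_self_of_dvd _ hd with h | h
  · exact absurd (χ.eq_one_iff_conductor_eq_one.mpr h) hχ
  · exact h

/-- The power sum in the statement equals a (shifted) Gauss sum. -/
lemma sum_eq_gaussSum_aux (χ : DirichletCharacter ℂ p) (ν : ℕ) (hν : 1 ≤ ν) :
    ∑ k ∈ Finset.Icc 1 (p - 1), (χ k * e ((k : ℝ) / (p : ℝ))) ^ ν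
      = gaussSum (χ ^ ν) (AddChar.mulShift ZMod.stdAddChar (ν : ZMod p)) := by
  have hp2 : 2 ≤ p := (Fact.out : p.Prime).two_le
  have hrange : Finset.range p = insert 0 (Finset.Icc 1 (p - 1)) := by
    ext k
    simp only [Finset.mem_range, Finset.mem_insert, Finset.mem_Icc]
    omega
  have h0 : (χ (0 : ℕ) * e ((0 : ℕ) / (p : ℝ))) ^ ν = 0 := by
    rw [Nat.cast_zero, MulChar.map_nonunit χ (by simp), zero_mul, zero_pow (by omega)]
  have hins : ∑ k ∈ Finset.range p, (χ k * e ((k : ℝ) / (p : ℝ))) ^ ν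
      = ∑ k ∈ Finset.Icc 1 (p - 1), (χ k * e ((k : ℝ) / (p : ℝ))) ^ ν := by
    rw [hrange, Finset.sum_insert (by simp), h0, zero_add]
  rw [← hins, gaussSum]
  refine Finset.sum_nbij' (fun k => (k : ZMod p)) (fun a => a.val) ?_ ?_ ?_ ?_ ?_
  · intro k _; exact Finset.mem_univ _
  · intro a _; simpa [Finset.mem_range] using ZMod.val_lt a
  · intro k hk
    exact ZMod.val_cast_of_lt (Finset.mem_range.mp hk)
  · intro a _; exact ZMod.natCast_zmod_val a
  · intro k _
    rw [AddChar.mulShift_apply, mul_pow, ← MulChar.pow_apply' χ (by omega : ν ≠ 0)]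
    congr 1
    have : (↑ν * (k : ZMod p)) = (((ν * k : ℕ) : ℤ) : ZMod p) := by push_cast; ring
    rw [this, ZMod.stdAddChar_coe, e]
    rw [← Complex.exp_nat_mul]
    congr 1
    have hpne : (p : ℂ) ≠ 0 := by
      exact_mod_cast (Fact.out : p.Prime).ne_zero
    push_cast
    ring

end Aux

theorem stmt_6 (p : ℕ) (hp : p.Prime) (χ : DirichletCharacter ℂ p)
    (hχ : orderOf χ = p - 1) :
    ∀ ν : ℕ, 1 ≤ ν → ν ≤ (p - 1) ^ 2 + (p - 1) - 1 →
      ‖∑ k ∈ Finset.Icc 1 (p - 1), (χ k * e ((k : ℝ) / (p : ℝ))) ^ ν‖ ≤ Real.sqrt p := by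
  haveI : Fact p.Prime := ⟨hp⟩
  intro ν hν1 hν2
  rw [sum_eq_gaussSum_aux χ ν hν1]
  by_cases hχν : χ ^ ν = 1
  · -- `χ^ν` is the trivial character; then `p ∤ ν` and the sum is `-1`.
    have hdvd : (p - 1) ∣ ν := hχ ▸ orderOf_dvd_of_pow_eq_one hχν
    have hpν : ¬ p ∣ ν := by
      intro hpd
      have hp2 : 2 ≤ p := hp.two_le
      have hcop : Nat.Coprime p (p - 1) := by
        refine (Nat.coprime_sub_self_left (m := p - 1) (n := p) (by omega)).mp ?_
        rw [show p - (p - 1) = 1 from by omega]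
        exact Nat.coprime_one_left _
      have hmul : p * (p - 1) ∣ ν := Nat.Coprime.mul_dvd_of_dvd_of_dvd hcop hpd hdvd
      have hle : p * (p - 1) ≤ ν := Nat.le_of_dvd (by omega) hmul
      have key : (p - 1) ^ 2 + (p - 1) = p * (p - 1) := by
        have h1 : p - 1 + 1 = p := by omega
        calc (p - 1) ^ 2 + (p - 1) = ((p - 1) + 1) * (p - 1) := by ring
          _ = p * (p - 1) := by rw [h1]
      have hlt : ν < p * (p - 1) := by
        calc ν ≤ (p - 1) ^ 2 + (p - 1) - 1 := hν2
          _ < (p - 1) ^ 2 + (p - 1) := by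
              have h0 : 0 < p - 1 := by omega
              exact Nat.sub_lt (Nat.lt_of_lt_of_le h0 (Nat.le_add_left _ _)) one_pos
          _ = p * (p - 1) := key
      exact hlt.not_ge hle
    have hν0 : (ν : ZMod p) ≠ 0 := by
      rwa [Ne, ZMod.natCast_eq_zero_iff]
    have hsum : ∑ a : ZMod p, ZMod.stdAddChar (a * (ν : ZMod p)) = 0 := by
      rw [AddChar.sum_mulShift _ (ZMod.isPrimitive_stdAddChar p), if_neg hν0]
      simp
    rw [hχν, gaussSum]
    have hterm : ∀ a : ZMod p,
        (1 : DirichletCharacter ℂ p) a * (AddChar.mulShift ZMod.stdAddChar (ν : ZMod p)) a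
          = ZMod.stdAddChar (a * (ν : ZMod p)) - (if a = 0 then 1 else 0) := by
      intro a
      rcases eq_or_ne a 0 with rfl | ha
      · simp [MulChar.map_nonunit, AddChar.mulShift_apply]
      · rw [MulChar.one_apply (isUnit_iff_ne_zero.mpr ha), one_mul, AddChar.mulShift_apply,
          if_neg ha, sub_zero, mul_comm]
    rw [Finset.sum_congr rfl fun a _ => hterm a, Finset.sum_sub_distrib, hsum,
      Finset.sum_ite_eq' Finset.univ (0 : ZMod p) (fun _ => (1 : ℂ))]
    simp only [Finset.mem_univ, if_true, zero_sub, norm_neg, norm_one]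
    rw [Real.one_le_sqrt]
    exact_mod_cast hp.one_le
  · -- `χ^ν` is nontrivial.
    rcases eq_or_ne (ν : ZMod p) 0 with hν0 | hν0
    · -- `p ∣ ν`: the Gauss sum is a pure character sum, which vanishes.
      have : gaussSum (χ ^ ν) (AddChar.mulShift ZMod.stdAddChar (ν : ZMod p)) = 0 := by
        rw [gaussSum]
        have : ∀ a : ZMod p,
            (χ ^ ν) a * (AddChar.mulShift ZMod.stdAddChar (ν : ZMod p)) a = (χ ^ ν) a := by
          intro a
          rw [AddChar.mulShift_apply, hν0, zero_mul, AddChar.map_zero_eq_one, mul_one]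
        rw [Finset.sum_congr rfl fun a _ => this a]
        exact MulChar.sum_eq_zero_of_ne_one hχν
      rw [this, norm_zero]
      exact Real.sqrt_nonneg p
    · -- `p ∤ ν`: shifted Gauss sum of a primitive character.
      rw [gaussSum_mulShift_of_isPrimitive _ (isPrimitive_aux hχν) (ν : ZMod p), norm_mul,
        norm_gaussSum_aux hχν]
      exact mul_le_of_le_one_left (Real.sqrt_nonneg p) (DirichletCharacter.norm_le_one _ _)
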